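/- arXiv:0908.1251 — 2 statements merged into one kernel-verified Lean document; each statement's English description precedes it below -/
import Mathlib

section
/- Let c₀ ∈ (1,∞) be the unique zero of ψ(t) = (t+1)ln(t+1) + (t−1)ln(t−1) − 2t in (1,∞). Let M > 0, let r : ℝ → (0,∞) satisfy r(x) ≤ c₀|x| + M for all |x| > M, and define φ : ℝ → ℝ by φ(x) := max{ln(|x| − M), 0} for |x| > M and φ(x) := 0 for |x| ≤ M. Then there exists M̃ > 0 such that for every x ∈ ℝ with |x| > M̃, (1/(2r(x)))∫_{x−r(x)}^{x+r(x)} φ(s) ds ≤ φ(x). -/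
open Filter MeasureTheory

/-- `ψ(t) = (t+1)ln(t+1) + (t-1)ln(t-1) - 2t`. -/
noncomputable def psi (t : ℝ) : ℝ :=
  (t + 1) * Real.log (t + 1) + (t - 1) * Real.log (t - 1) - 2 * t

/-! ### Auxiliary definitions and lemmas -/

/-- `ln⁺`. -/
noncomputable def gplus (u : ℝ) : ℝ := max (Real.log u) 0

/-- `∫_0^a ln⁺`, extended by `0` below `1` (a convex function). -/
noncomputable def Kp (a : ℝ) : ℝ := if 1 ≤ a then a * Real.log a - a + 1 else 0

lemma gplus_nonneg (u : ℝ) : 0 ≤ gplus u := le_max_right _ _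

lemma gplus_neg (u : ℝ) : gplus (-u) = gplus u := by
  unfold gplus; rw [Real.log_neg_eq_log]

lemma gplus_continuous : Continuous gplus := by
  have h0 : ContinuousAt gplus 0 := by
    have hev : gplus =ᶠ[nhds (0:ℝ)] (fun _ => (0:ℝ)) := by
      have hmem : Set.Ioo (-1:ℝ) 1 ∈ nhds (0:ℝ) := Ioo_mem_nhds (by norm_num) (by norm_num)
      filter_upwards [hmem] with u hu
      have hlog : Real.log u ≤ 0 := by
        rw [← Real.log_abs]
        exact Real.log_nonpos (abs_nonneg u) (le_of_lt (abs_lt.2 ⟨hu.1, hu.2⟩))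
      exact max_eq_right hlog
    exact continuousAt_const.congr hev.symm
  rw [continuous_iff_continuousAt]
  intro u
  rcases eq_or_ne u 0 with rfl | hu
  · exact h0
  · exact (Real.continuousAt_log hu).max continuousAt_const

lemma Kp_nonneg (a : ℝ) : 0 ≤ Kp a := by
  unfold Kp; split_ifs with h
  · have ha : 0 < a := lt_of_lt_of_le one_pos h
    have h1 : Real.log a⁻¹ ≤ a⁻¹ - 1 := Real.log_le_sub_one_of_pos (inv_pos.2 ha)
    rw [Real.log_inv] at h1
    have h2 : a * (1 - a⁻¹) ≤ a * Real.log a :=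
      mul_le_mul_of_nonneg_left (by linarith) ha.le
    have h3 : a * (1 - a⁻¹) = a - 1 := by field_simp
    linarith
  · exact le_refl 0

lemma Kp_of_le {a : ℝ} (h : a ≤ 1) : Kp a = 0 := by
  unfold Kp; split_ifs with h1
  · have : a = 1 := le_antisymm h h1
    subst this; simp
  · rfl

lemma Kp_le_C {a M : ℝ} (hM : 0 < M) (ha : a ≤ M) : Kp a ≤ M * |Real.log M| + 1 := by
  have hC : 0 ≤ M * |Real.log M| := mul_nonneg hM.le (abs_nonneg _)
  rcases le_or_gt a 1 with h | h
  · rw [Kp_of_le h]; linarith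
  · unfold Kp; rw [if_pos h.le]
    have ha0 : 0 < a := by linarith
    have haM : Real.log a ≤ Real.log M := Real.log_le_log ha0 ha
    have h0 : 0 ≤ Real.log a := Real.log_nonneg h.le
    have h1 : a * Real.log a ≤ M * Real.log a := mul_le_mul_of_nonneg_right ha h0
    have h2 : M * Real.log a ≤ M * Real.log M := mul_le_mul_of_nonneg_left haM hM.le
    have h3 : Real.log M ≤ |Real.log M| := le_abs_self _
    have h4 : M * Real.log M ≤ M * |Real.log M| := mul_le_mul_of_nonneg_left h3 hM.le
    linarith

lemma int_gplus_zero (c : ℝ) : (∫ u in (0:ℝ)..c, gplus u) ≤ Kp c := by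
  rcases le_or_gt c 1 with h | h
  · rcases le_or_gt c 0 with h0 | h0
    · rw [Kp_of_le h]
      rw [intervalIntegral.integral_symm]
      have : 0 ≤ ∫ u in c..(0:ℝ), gplus u :=
        intervalIntegral.integral_nonneg h0 (fun u _ => gplus_nonneg u)
      linarith
    · rw [Kp_of_le h]
      have hcg : Set.EqOn gplus (fun _ => (0:ℝ)) (Set.uIcc 0 c) := by
        intro u hu
        rw [Set.uIcc_of_le h0.le] at hu
        exact max_eq_right (Real.log_nonpos hu.1 (le_trans hu.2 h))
      rw [intervalIntegral.integral_congr hcg]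
      simp
  · have h01 : IntervalIntegrable gplus volume 0 1 := gplus_continuous.intervalIntegrable _ _
    have h1c : IntervalIntegrable gplus volume 1 c := gplus_continuous.intervalIntegrable _ _
    rw [← intervalIntegral.integral_add_adjacent_intervals h01 h1c]
    have e1 : (∫ u in (0:ℝ)..1, gplus u) = 0 := by
      have hcg : Set.EqOn gplus (fun _ => (0:ℝ)) (Set.uIcc 0 1) := by
        intro u hu
        rw [Set.uIcc_of_le (by norm_num : (0:ℝ) ≤ 1)] at hu
        exact max_eq_right (Real.log_nonpos hu.1 hu.2)
      rw [intervalIntegral.integral_congr hcg]; simp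
    have e2 : (∫ u in (1:ℝ)..c, gplus u) = c * Real.log c - c + 1 := by
      have hcg : Set.EqOn gplus Real.log (Set.uIcc 1 c) := by
        intro u hu
        rw [Set.uIcc_of_le h.le] at hu
        exact max_eq_left (Real.log_nonneg hu.1)
      rw [intervalIntegral.integral_congr hcg, integral_log]
      simp [Real.log_one]
    rw [e1, e2]
    unfold Kp
    rw [if_pos h.le]
    simp

lemma int_gplus (a c : ℝ) : (∫ u in a..c, gplus u) ≤ Kp c + Kp (-a) := by
  have hInt : ∀ p q : ℝ, IntervalIntegrable gplus volume p q :=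
    fun p q => gplus_continuous.intervalIntegrable p q
  rw [← intervalIntegral.integral_add_adjacent_intervals (hInt a 0) (hInt 0 c)]
  have h2 : (∫ u in (0:ℝ)..c, gplus u) ≤ Kp c := int_gplus_zero c
  have h1 : (∫ u in a..(0:ℝ), gplus u) ≤ Kp (-a) := by
    have key : (∫ u in a..(0:ℝ), gplus u) = ∫ u in (0:ℝ)..(-a), gplus u := by
      have h := intervalIntegral.integral_comp_neg (a := (0:ℝ)) (b := -a) (f := gplus)
      simp only [gplus_neg] at h
      rw [h, neg_neg, neg_zero]
    rw [key]
    exact int_gplus_zero (-a)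
  linarith

lemma caseA_int {b ρ : ℝ} (hρ : 0 ≤ ρ) (h1 : 1 ≤ b - ρ) :
    (∫ u in (b-ρ)..(b+ρ), Real.log u) ≤ 2 * ρ * Real.log b := by
  have hb1 : 1 ≤ b := by linarith
  have hle : b - ρ ≤ b + ρ := by linarith
  have hkey : ∀ x ∈ Set.Icc (b-ρ) (b+ρ), Real.log x + Real.log (2*b - x) ≤ 2 * Real.log b := by
    intro x hx
    obtain ⟨hx1, hx2⟩ := hx
    have hx0 : 0 < x := by linarith
    have h2bx : 0 < 2*b - x := by linarith
    rw [← Real.log_mul (ne_of_gt hx0) (ne_of_gt h2bx)]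
    have hsq : x * (2*b - x) ≤ b * b := by nlinarith [sq_nonneg (b - x)]
    calc Real.log (x * (2*b - x)) ≤ Real.log (b * b) :=
          Real.log_le_log (mul_pos hx0 h2bx) hsq
      _ = 2 * Real.log b := by
          rw [Real.log_mul (by linarith) (by linarith)]; ring
  have hcont1 : IntervalIntegrable Real.log volume (b-ρ) (b+ρ) := by
    apply ContinuousOn.intervalIntegrable
    apply Real.continuousOn_log.mono
    intro x hx
    rw [Set.uIcc_of_le hle] at hx
    simp only [Set.mem_compl_iff, Set.mem_singleton_iff]
    intro hx0; rw [hx0] at hx; linarith [hx.1]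
  have hcont2 : IntervalIntegrable (fun x => Real.log (2*b - x)) volume (b-ρ) (b+ρ) := by
    apply ContinuousOn.intervalIntegrable
    apply ContinuousOn.comp Real.continuousOn_log
    · exact (continuous_const.sub continuous_id).continuousOn
    · intro x hx
      rw [Set.uIcc_of_le hle] at hx
      simp only [Set.mem_compl_iff, Set.mem_singleton_iff]
      intro h0
      have : (0:ℝ) < 2*b - x := by
        have := hx.2; linarith
      rw [h0] at this; linarith
  have hrefl : (∫ u in (b-ρ)..(b+ρ), Real.log u) = ∫ u in (b-ρ)..(b+ρ), Real.log (2*b - u) := by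
    have h := intervalIntegral.integral_comp_sub_left (a := b-ρ) (b := b+ρ) (f := Real.log) (2*b)
    rw [h, show 2*b - (b+ρ) = b - ρ by ring, show 2*b - (b-ρ) = b + ρ by ring]
  have hsum : (∫ u in (b-ρ)..(b+ρ), (Real.log u + Real.log (2*b - u))) ≤
      ∫ _u in (b-ρ)..(b+ρ), 2 * Real.log b := by
    exact intervalIntegral.integral_mono_on hle (hcont1.add hcont2)
      intervalIntegrable_const hkey
  rw [intervalIntegral.integral_add hcont1 hcont2] at hsum
  rw [intervalIntegral.integral_const] at hsum
  have : (b + ρ - (b - ρ)) • (2 * Real.log b) = 2 * ρ * (2 * Real.log b) := by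
    rw [smul_eq_mul]; ring
  rw [this] at hsum
  linarith [hrefl ▸ hsum]

lemma hasDerivAt_piece (k t : ℝ) (h : 0 < t + k) :
    HasDerivAt (fun t : ℝ => (t+k) * Real.log (t+k) - (t+k)) (Real.log (t+k)) t := by
  have h1 : HasDerivAt (fun t : ℝ => t + k) 1 t := (hasDerivAt_id t).add_const k
  have h2 : HasDerivAt (fun t : ℝ => Real.log (t + k)) ((t+k)⁻¹) t := by
    have hl := Real.hasDerivAt_log (ne_of_gt h)
    have h3 := HasDerivAt.comp t hl h1
    rw [mul_one] at h3
    exact h3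
  have h4 := (h1.mul h2).sub h1
  have h5 : (1 * Real.log (t + k) + (t + k) * (t + k)⁻¹ - 1) = Real.log (t+k) := by
    rw [mul_inv_cancel₀ (ne_of_gt h)]; ring
  rw [h5] at h4
  exact h4

lemma convexOn_onepiece (k m q lo hi : ℝ) (hpos : ∀ t ∈ Set.Icc lo hi, 0 < t + k) :
    ConvexOn ℝ (Set.Icc lo hi)
      (fun t => ((t+k) * Real.log (t+k) - (t+k)) + (m * t + q)) := by
  have hd : ∀ t : ℝ, 0 < t + k → HasDerivAt
      (fun t => ((t+k) * Real.log (t+k) - (t+k)) + (m * t + q)) (Real.log (t+k) + m) t := by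
    intro t ht
    have hlin : HasDerivAt (fun t : ℝ => m * t + q) m t := by
      have := ((hasDerivAt_id t).const_mul m).add_const q
      simpa using this
    exact (hasDerivAt_piece k t ht).add hlin
  apply MonotoneOn.convexOn_of_deriv (convex_Icc lo hi)
  · intro t ht; exact (hd t (hpos t ht)).continuousAt.continuousWithinAt
  · intro t ht
    exact (hd t (hpos t (interior_subset ht))).differentiableAt.differentiableWithinAt
  · intro u hu v hv huv
    have hu' := hpos u (interior_subset hu)
    have hv' := hpos v (interior_subset hv)
    rw [(hd u hu').deriv, (hd v hv').deriv]
    have : Real.log (u+k) ≤ Real.log (v+k) := Real.log_le_log hu' (by linarith)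
    linarith

lemma convexOn_twopiece (k₁ k₂ m q lo hi : ℝ)
    (hpos₁ : ∀ t ∈ Set.Icc lo hi, 0 < t + k₁) (hpos₂ : ∀ t ∈ Set.Icc lo hi, 0 < t + k₂) :
    ConvexOn ℝ (Set.Icc lo hi)
      (fun t => ((t+k₁) * Real.log (t+k₁) - (t+k₁)) + ((t+k₂) * Real.log (t+k₂) - (t+k₂))
        + (m * t + q)) := by
  have hd : ∀ t : ℝ, 0 < t + k₁ → 0 < t + k₂ → HasDerivAt
      (fun t => ((t+k₁) * Real.log (t+k₁) - (t+k₁)) + ((t+k₂) * Real.log (t+k₂) - (t+k₂))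
        + (m * t + q)) (Real.log (t+k₁) + Real.log (t+k₂) + m) t := by
    intro t ht1 ht2
    have hlin : HasDerivAt (fun t : ℝ => m * t + q) m t := by
      have := ((hasDerivAt_id t).const_mul m).add_const q
      simpa using this
    exact ((hasDerivAt_piece k₁ t ht1).add (hasDerivAt_piece k₂ t ht2)).add hlin
  apply MonotoneOn.convexOn_of_deriv (convex_Icc lo hi)
  · intro t ht; exact (hd t (hpos₁ t ht) (hpos₂ t ht)).continuousAt.continuousWithinAt
  · intro t ht
    exact (hd t (hpos₁ t (interior_subset ht))
      (hpos₂ t (interior_subset ht))).differentiableAt.differentiableWithinAt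
  · intro u hu v hv huv
    have hu1 := hpos₁ u (interior_subset hu)
    have hu2 := hpos₂ u (interior_subset hu)
    have hv1 := hpos₁ v (interior_subset hv)
    have hv2 := hpos₂ v (interior_subset hv)
    rw [(hd u hu1 hu2).deriv, (hd v hv1 hv2).deriv]
    have e1 : Real.log (u+k₁) ≤ Real.log (v+k₁) := Real.log_le_log hu1 (by linarith)
    have e2 : Real.log (u+k₂) ≤ Real.log (v+k₂) := Real.log_le_log hu2 (by linarith)
    linarith

lemma log_le_quarter (b : ℝ) (hb : 0 < b) : Real.log b ≤ b/4 + 0.4 := by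
  have h1 : Real.log (b/4) ≤ b/4 - 1 := Real.log_le_sub_one_of_pos (by linarith)
  have h2 : Real.log b = Real.log (b/4) + Real.log 4 := by
    rw [← Real.log_mul (ne_of_gt (by linarith : (0:ℝ) < b/4)) (by norm_num : (4:ℝ) ≠ 0),
      div_mul_cancel₀ b (by norm_num : (4:ℝ) ≠ 0)]
  have h3 : Real.log 4 ≤ 1.4 := by
    rw [show (4:ℝ) = 2^2 by norm_num, Real.log_pow]
    have := Real.log_two_lt_d9
    push_cast
    linarith
  linarith

set_option maxHeartbeats 1000000 in
/-- With `c₀` the unique zero of `ψ` in `(1,∞)`: if `M > 0`, `r : ℝ → (0,∞)` satisfies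
`r(x) ≤ c₀|x| + M` for `|x| > M`, and `φ := ln⁺(|·| - M)` (i.e.
`φ(x) = max{ln(|x| - M), 0}`, equal to `0` for `|x| ≤ M + 1`), then there exists
`M̃ > 0` such that `λ_{x,r(x)}(φ) ≤ φ(x)` for every `|x| > M̃`. -/
theorem stmt16 (c₀ M : ℝ) (hc₀1 : 1 < c₀) (hc₀ : psi c₀ = 0) (hM : 0 < M)
    (r : ℝ → ℝ) (hr_pos : ∀ x, 0 < r x)
    (hr : ∀ x : ℝ, M < |x| → r x ≤ c₀ * |x| + M) :
    ∃ Mt > (0:ℝ), ∀ x : ℝ, Mt < |x| →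
      (1 / (2 * r x)) * (∫ s in (x - r x)..(x + r x), max (Real.log (|s| - M)) 0)
      ≤ max (Real.log (|x| - M)) 0 := by
  have hc0 : 0 < c₀ := by linarith
  set C : ℝ := M * |Real.log M| + 1 with hCdef
  have hC0 : 0 < C := by
    rw [hCdef]
    have := mul_nonneg hM.le (abs_nonneg (Real.log M))
    linarith
  set A₀ : ℝ := (4*c₀*M + 2 + 2*C) / (2*M) with hA0def
  have hA0pos : 0 < A₀ := by
    rw [hA0def]
    apply div_pos
    · linarith [mul_pos hc0 hM, hC0]
    · linarith
  refine ⟨M + 10*M + 20 + 20*C + Real.exp A₀ + (c₀-1)⁻¹, by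
    have h1 := Real.exp_pos A₀
    have h2 : (0:ℝ) < (c₀-1)⁻¹ := inv_pos.2 (by linarith)
    linarith, ?_⟩
  intro x hx
  set ρ := r x with hρdef
  set y := |x| with hydef
  set b := y - M with hbdef
  set B := y + M with hBdef
  set L := Real.log b with hLdef
  clear_value C A₀ ρ y b B L
  have hρ0 : 0 < ρ := by rw [hρdef]; exact hr_pos x
  have hexp : 0 < Real.exp A₀ := Real.exp_pos _
  have hinv : 0 < (c₀-1)⁻¹ := inv_pos.2 (by linarith)
  have hb_big : 10*M + 20 + 20*C + Real.exp A₀ + (c₀-1)⁻¹ < b := by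
    rw [hbdef]; linarith
  have hb20 : 20 < b := by linarith
  have hb10M : 10*M < b := by linarith
  have hb20C : 20*C < b := by linarith
  have hbexp : Real.exp A₀ < b := by linarith
  have hbinv : (c₀-1)⁻¹ < b := by linarith
  have hb1 : 1 < b := by linarith
  have hb0 : 0 < b := by linarith
  have hMb' : M < b := by linarith
  have hyb : y = b + M := by rw [hbdef]; ring
  have hy0 : 0 < y := by rw [hyb]; linarith
  have hy2b : y ≤ 2*b := by rw [hyb]; linarith
  have hy10 : 10 < y := by rw [hyb]; linarith
  have hMx : M < y := by linarith
  have hρmax : ρ ≤ c₀ * y + M := by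
    rw [hρdef, hydef]
    exact hr x (by rw [← hydef]; exact hMx)
  have hL0 : 0 ≤ L := by rw [hLdef]; exact Real.log_nonneg hb1.le
  have hL4 : L ≤ b/4 + 0.4 := by rw [hLdef]; exact log_le_quarter b hb0
  have hLA0 : A₀ ≤ L := by
    rw [hLdef]
    calc A₀ = Real.log (Real.exp A₀) := (Real.log_exp _).symm
      _ ≤ Real.log b := Real.log_le_log hexp hbexp.le
  have hly : Real.log y ≤ L + M/b := by
    have h1 : Real.log y - Real.log b = Real.log (y/b) :=
      (Real.log_div (ne_of_gt hy0) (ne_of_gt hb0)).symm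
    have h2 : Real.log (y/b) ≤ y/b - 1 := Real.log_le_sub_one_of_pos (div_pos hy0 hb0)
    have h3 : y/b - 1 = M/b := by
      rw [div_sub_one (ne_of_gt hb0), hbdef]; ring_nf
    rw [hLdef]; linarith
  have hMbfrac : M/b ≤ 0.1 := by
    rw [div_le_iff₀ hb0]; linarith
  -- the key integral bound over the symmetric interval around y
  have key : (∫ s in (y - ρ)..(y + ρ), max (Real.log (|s| - M)) 0) ≤ 2 * ρ * L := by
    have hfcont : Continuous (fun s : ℝ => max (Real.log (|s| - M)) 0) :=
      gplus_continuous.comp (continuous_abs.sub continuous_const)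
    rcases le_or_gt ρ (b - 1) with hA | hB
    · -- Case A: small radius, interval stays in the region where φ = ln(s - M)
      have hcg : Set.EqOn (fun s : ℝ => max (Real.log (|s| - M)) 0)
          (fun s => Real.log (s - M)) (Set.uIcc (y - ρ) (y + ρ)) := by
        intro s hs
        rw [Set.uIcc_of_le (by linarith)] at hs
        have hs1 : M + 1 ≤ s := by
          have := hs.1; rw [hbdef] at hA; linarith
        have hsabs : |s| = s := abs_of_nonneg (by linarith)
        simp only [hsabs]
        exact max_eq_left (Real.log_nonneg (by linarith))
      rw [intervalIntegral.integral_congr hcg,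
        intervalIntegral.integral_comp_sub_right (fun u => Real.log u) M]
      have h := caseA_int (b := b) (ρ := ρ) hρ0.le (by linarith : 1 ≤ b - ρ)
      rw [show y - ρ - M = b - ρ by rw [hbdef]; ring,
        show y + ρ - M = b + ρ by rw [hbdef]; ring, hLdef]
      exact h
    · -- Case B: large radius
      have hKC : ∀ a : ℝ, a ≤ M → Kp a ≤ C := by
        intro a ha; rw [hCdef]; exact Kp_le_C hM ha
      have master : (∫ s in (y - ρ)..(y + ρ), max (Real.log (|s| - M)) 0)
          ≤ Kp (b + ρ) + Kp (ρ - B) + 2*C := by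
        rcases le_or_gt ρ y with hry | hry
        · have hcg : Set.EqOn (fun s : ℝ => max (Real.log (|s| - M)) 0)
              (fun s => gplus (s - M)) (Set.uIcc (y - ρ) (y + ρ)) := by
            intro s hs
            rw [Set.uIcc_of_le (by linarith)] at hs
            have hs0 : 0 ≤ s := le_trans (by linarith) hs.1
            show max (Real.log (|s| - M)) 0 = max (Real.log (s - M)) 0
            rw [abs_of_nonneg hs0]
          rw [intervalIntegral.integral_congr hcg,
            intervalIntegral.integral_comp_sub_right (fun u => gplus u) M]
          have h1 := int_gplus (y - ρ - M) (y + ρ - M)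
          rw [show y + ρ - M = b + ρ by rw [hbdef]; ring,
            show -(y - ρ - M) = ρ - b by rw [hbdef]; ring] at h1
          have h2 : Kp (ρ - b) ≤ C := hKC _ (by linarith)
          have h3 : 0 ≤ Kp (ρ - B) := Kp_nonneg _
          rw [show y - ρ - M = b - ρ by rw [hbdef]; ring,
            show y + ρ - M = b + ρ by rw [hbdef]; ring]
          rw [show y - ρ - M = b - ρ by rw [hbdef]; ring] at h1
          linarith
        · have hi1 : IntervalIntegrable (fun s : ℝ => max (Real.log (|s| - M)) 0)
              volume (y - ρ) 0 := hfcont.intervalIntegrable _ _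
          have hi2 : IntervalIntegrable (fun s : ℝ => max (Real.log (|s| - M)) 0)
              volume 0 (y + ρ) := hfcont.intervalIntegrable _ _
          rw [← intervalIntegral.integral_add_adjacent_intervals hi1 hi2]
          have hpos : (∫ s in (0:ℝ)..(y + ρ), max (Real.log (|s| - M)) 0)
              ≤ Kp (b + ρ) + C := by
            have hcg : Set.EqOn (fun s : ℝ => max (Real.log (|s| - M)) 0)
                (fun s => gplus (s - M)) (Set.uIcc 0 (y + ρ)) := by
              intro s hs
              rw [Set.uIcc_of_le (by linarith)] at hs
              show max (Real.log (|s| - M)) 0 = max (Real.log (s - M)) 0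
              rw [abs_of_nonneg hs.1]
            rw [intervalIntegral.integral_congr hcg,
              intervalIntegral.integral_comp_sub_right (fun u => gplus u) M]
            have h1 := int_gplus (0 - M) (y + ρ - M)
            rw [show y + ρ - M = b + ρ by rw [hbdef]; ring,
              show -(0 - M) = M by ring] at h1
            have h2 : Kp M ≤ C := hKC M le_rfl
            rw [show y + ρ - M = b + ρ by rw [hbdef]; ring]
            linarith
          have hneg : (∫ s in (y - ρ)..(0:ℝ), max (Real.log (|s| - M)) 0)
              ≤ Kp (ρ - B) + C := by
            have hcg : Set.EqOn (fun s : ℝ => max (Real.log (|s| - M)) 0)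
                (fun s => gplus (-s - M)) (Set.uIcc (y - ρ) 0) := by
              intro s hs
              rw [Set.uIcc_of_le (by linarith)] at hs
              show max (Real.log (|s| - M)) 0 = max (Real.log (-s - M)) 0
              rw [abs_of_nonpos hs.2]
            rw [intervalIntegral.integral_congr hcg]
            have hcn : (∫ s in (y - ρ)..(0:ℝ), gplus (-s - M))
                = ∫ u in (0:ℝ)..(ρ - y), gplus (u - M) := by
              have h := intervalIntegral.integral_comp_neg (a := y - ρ) (b := (0:ℝ))
                (f := fun u => gplus (u - M))
              rw [h, neg_zero, show -(y - ρ) = ρ - y by ring]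
            rw [hcn, intervalIntegral.integral_comp_sub_right (fun u => gplus u) M]
            have h1 := int_gplus (0 - M) (ρ - y - M)
            rw [show ρ - y - M = ρ - B by rw [hBdef]; ring,
              show -(0 - M) = M by ring] at h1
            have h2 : Kp M ≤ C := hKC M le_rfl
            rw [show ρ - y - M = ρ - B by rw [hBdef]; ring]
            linarith
          linarith
      -- endpoint inequalities
      have hlog2b : Real.log (2*b - 1) ≤ L + 0.7 := by
        have h1 : Real.log (2*b - 1) ≤ Real.log (2*b) :=
          Real.log_le_log (by linarith) (by linarith)
        have h2 : Real.log (2*b) = Real.log 2 + L := by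
          rw [Real.log_mul two_ne_zero (ne_of_gt hb0), hLdef]
        linarith [Real.log_two_lt_d9]
      have P1 : (2*b - 1) * Real.log (2*b - 1) - (2*b - 1) + 1 + 2*C ≤ 2*(b - 1)*L := by
        have h1 : (2*b - 1) * Real.log (2*b - 1) ≤ (2*b - 1) * (L + 0.7) :=
          mul_le_mul_of_nonneg_left hlog2b (by linarith)
        linarith [h1, hL4, hb20, hb20C, hC0]
      have hlog2y : Real.log (2*y + 1) ≤ Real.log y + 0.75 := by
        have h1 : Real.log (2*y + 1) - Real.log (2*y) = Real.log ((2*y + 1)/(2*y)) :=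
          (Real.log_div (ne_of_gt (by linarith)) (ne_of_gt (by linarith))).symm
        have h2 : Real.log ((2*y + 1)/(2*y)) ≤ (2*y + 1)/(2*y) - 1 :=
          Real.log_le_sub_one_of_pos (div_pos (by linarith) (by linarith))
        have h3 : (2*y + 1)/(2*y) - 1 = 1/(2*y) := by
          rw [div_sub_one (ne_of_gt (by linarith : (0:ℝ) < 2*y))]; ring_nf
        have h4 : 1/(2*y) ≤ 0.05 := by
          rw [div_le_iff₀ (by linarith)]; linarith
        have h5 : Real.log (2*y) = Real.log 2 + Real.log y :=
          Real.log_mul two_ne_zero (ne_of_gt hy0)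
        linarith [Real.log_two_lt_d9]
      have hlyL : Real.log y ≤ L + 0.1 := by linarith
      have P2 : (2*y + 1) * Real.log (2*y + 1) - (2*y + 1) + 1 + 2*C ≤ 2*(B + 1)*L := by
        have h1 : (2*y + 1) * Real.log (2*y + 1) ≤ (2*y + 1) * (Real.log y + 0.75) :=
          mul_le_mul_of_nonneg_left hlog2y (by linarith)
        have h2 : (2*y + 1) * Real.log y ≤ (2*y + 1) * (L + 0.1) :=
          mul_le_mul_of_nonneg_left hlyL (by linarith)
        have h3 : 0 ≤ M*L := mul_nonneg hM.le hL0
        rw [hBdef]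
        have hyB : b ≤ y := by rw [hyb]; linarith
        linarith [h1, h2, h3, hL0, hb20C, hb20, hyB]
      have hpsi' : (c₀+1) * Real.log (c₀+1) + (c₀-1) * Real.log (c₀-1) - 2*c₀ = 0 := by
        have := hc₀; unfold psi at this; linarith
      have hyly : y * Real.log y ≤ y * L + 2*M := by
        have h1 : y * Real.log y ≤ y * (L + M/b) :=
          mul_le_mul_of_nonneg_left hly hy0.le
        have h2 : y * (M/b) ≤ 2*M := by
          rw [show y * (M/b) = y*M/b by ring, div_le_iff₀ hb0]
          linarith [mul_le_mul_of_nonneg_right hy2b hM.le]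
        linarith [h1, h2]
      have P3 : ((c₀+1)*y) * Real.log ((c₀+1)*y) - ((c₀+1)*y)
          + (((c₀-1)*y) * Real.log ((c₀-1)*y) - ((c₀-1)*y)) + 2 + 2*C
          ≤ 2*(c₀*y + M)*L := by
        rw [Real.log_mul (ne_of_gt (by linarith : (0:ℝ) < c₀ + 1)) (ne_of_gt hy0),
          Real.log_mul (ne_of_gt (by linarith : (0:ℝ) < c₀ - 1)) (ne_of_gt hy0)]
        have hpsiy : y * ((c₀+1) * Real.log (c₀+1) + (c₀-1) * Real.log (c₀-1) - 2*c₀) = 0 := by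
          rw [hpsi']; ring
        have h5 : (2*c₀) * (y * Real.log y) ≤ (2*c₀) * (y * L + 2*M) :=
          mul_le_mul_of_nonneg_left hyly (by linarith)
        have h6 : 2*M*A₀ ≤ 2*M*L := mul_le_mul_of_nonneg_left hLA0 (by linarith)
        have h7 : 2*M*A₀ = 4*c₀*M + 2 + 2*C := by
          have hM0 : M ≠ 0 := ne_of_gt hM
          rw [hA0def]; field_simp
        linarith [hpsiy, h5, h6, h7]
      -- combine via convexity
      have hfin : Kp (b + ρ) + Kp (ρ - B) + 2*C ≤ 2*ρ*L := by
        have hKbρ : Kp (b + ρ) = (b+ρ) * Real.log (b+ρ) - (b+ρ) + 1 := by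
          unfold Kp; rw [if_pos (by linarith : (1:ℝ) ≤ b + ρ)]
        rcases le_or_gt ρ (B + 1) with hW1 | hW2
        · -- window 1
          have hKρB : Kp (ρ - B) = 0 := Kp_of_le (by linarith)
          have hconv : ConvexOn ℝ (Set.Icc (b-1) (B+1))
              (fun t => ((t+b) * Real.log (t+b) - (t+b)) + ((-(2*L)) * t + (1 + 2*C))) := by
            apply convexOn_onepiece
            intro t ht
            have := ht.1; linarith
          have hBb : b - 1 ≤ B + 1 := by rw [hBdef, hbdef]; linarith
          have hmem : ρ ∈ segment ℝ (b-1) (B+1) := by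
            rw [segment_eq_Icc hBb]; exact ⟨hB.le, hW1⟩
          have hle := hconv.le_on_segment (Set.left_mem_Icc.2 hBb) (Set.right_mem_Icc.2 hBb) hmem
          have hG1 : ((b-1+b) * Real.log (b-1+b) - (b-1+b)) + ((-(2*L)) * (b-1) + (1 + 2*C)) ≤ 0 := by
            rw [show b-1+b = 2*b-1 by ring]
            linarith [P1]
          have hG2 : ((B+1+b) * Real.log (B+1+b) - (B+1+b)) + ((-(2*L)) * (B+1) + (1 + 2*C)) ≤ 0 := by
            rw [show B+1+b = 2*y+1 by rw [hBdef, hbdef]; ring]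
            linarith [P2]
          have hGρ : ((ρ+b) * Real.log (ρ+b) - (ρ+b)) + ((-(2*L)) * ρ + (1 + 2*C)) ≤ 0 :=
            le_trans hle (max_le hG1 hG2)
          rw [hKbρ, hKρB, show b + ρ = ρ + b by ring]
          linarith
        · -- window 2
          have hKρB : Kp (ρ - B) = (ρ-B) * Real.log (ρ-B) - (ρ-B) + 1 := by
            unfold Kp; rw [if_pos (by linarith : (1:ℝ) ≤ ρ - B)]
          have hconv : ConvexOn ℝ (Set.Icc (B+1) (c₀*y + M))
              (fun t => ((t+b) * Real.log (t+b) - (t+b)) + ((t+(-B)) * Real.log (t+(-B)) - (t+(-B)))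
                + ((-(2*L)) * t + (2 + 2*C))) := by
            apply convexOn_twopiece
            · intro t ht
              have := ht.1; rw [hBdef] at this; linarith
            · intro t ht
              have := ht.1; linarith
          have hBm : B + 1 ≤ c₀*y + M := by linarith
          have hmem : ρ ∈ segment ℝ (B+1) (c₀*y + M) := by
            rw [segment_eq_Icc hBm]; exact ⟨hW2.le, hρmax⟩
          have hle := hconv.le_on_segment (Set.left_mem_Icc.2 hBm) (Set.right_mem_Icc.2 hBm) hmem
          have hG1 : ((B+1+b) * Real.log (B+1+b) - (B+1+b))
              + ((B+1+(-B)) * Real.log (B+1+(-B)) - (B+1+(-B)))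
              + ((-(2*L)) * (B+1) + (2 + 2*C)) ≤ 0 := by
            rw [show B+1+b = 2*y+1 by rw [hBdef, hbdef]; ring,
              show B+1+(-B) = (1:ℝ) by ring]
            simp only [Real.log_one]
            linarith [P2]
          have hG2 : ((c₀*y+M+b) * Real.log (c₀*y+M+b) - (c₀*y+M+b))
              + ((c₀*y+M+(-B)) * Real.log (c₀*y+M+(-B)) - (c₀*y+M+(-B)))
              + ((-(2*L)) * (c₀*y+M) + (2 + 2*C)) ≤ 0 := by
            rw [show c₀*y+M+b = (c₀+1)*y by rw [hbdef]; ring,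
              show c₀*y+M+(-B) = (c₀-1)*y by rw [hBdef]; ring]
            linarith [P3]
          have hGρ : ((ρ+b) * Real.log (ρ+b) - (ρ+b)) + ((ρ+(-B)) * Real.log (ρ+(-B)) - (ρ+(-B)))
              + ((-(2*L)) * ρ + (2 + 2*C)) ≤ 0 :=
            le_trans hle (max_le hG1 hG2)
          rw [hKbρ, hKρB, show b + ρ = ρ + b by ring, show ρ - B = ρ + (-B) by ring]
          linarith
      linarith
  -- symmetrization: reduce from x to y = |x|
  have hsymm : (∫ s in (x - ρ)..(x + ρ), max (Real.log (|s| - M)) 0)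
      = ∫ s in (y - ρ)..(y + ρ), max (Real.log (|s| - M)) 0 := by
    rcases abs_cases x with ⟨h1, _⟩ | ⟨h1, _⟩
    · rw [show y = x from hydef.trans h1]
    · have hyx : y = -x := hydef.trans h1
      have h := intervalIntegral.integral_comp_neg (a := x - ρ) (b := x + ρ)
        (f := fun s : ℝ => max (Real.log (|s| - M)) 0)
      simp only [abs_neg] at h
      rw [hyx, show -x - ρ = -(x + ρ) by ring, show -x + ρ = -(x - ρ) by ring]
      exact h
  have h2ρ : (0:ℝ) < 2 * ρ := by linarith
  calc 1 / (2 * ρ) * (∫ s in (x - ρ)..(x + ρ), max (Real.log (|s| - M)) 0)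
      = 1 / (2 * ρ) * (∫ s in (y - ρ)..(y + ρ), max (Real.log (|s| - M)) 0) := by rw [hsymm]
    _ ≤ 1 / (2 * ρ) * (2 * ρ * L) := by
        exact mul_le_mul_of_nonneg_left key (le_of_lt (one_div_pos.mpr h2ρ))
    _ = L := by
        have hρne : ρ ≠ 0 := ne_of_gt hρ0
        field_simp
    _ ≤ max L 0 := le_max_left _ _
end

section
/- Let c > 1 and α ∈ (0,1) be such that (c+1)^{1−α} + (c−1)^{1−α} ≤ 2(1−α)c. Then for every x ∈ ℝ with x ≠ 0, (1/(2c|x|))∫_{x−c|x|}^{x+c|x|} |s|^{−α} ds ≤ |x|^{−α}. -/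
open MeasureTheory Real

lemma abs_rpow_intInt (α : ℝ) (hα : -1 < -α) (a b : ℝ) :
    IntervalIntegrable (fun s : ℝ => |s| ^ (-α)) volume a b := by
  suffices h : ∀ b : ℝ, 0 ≤ b → IntervalIntegrable (fun s : ℝ => |s| ^ (-α)) volume 0 b by
    have key : ∀ b : ℝ, IntervalIntegrable (fun s : ℝ => |s| ^ (-α)) volume 0 b := by
      intro b
      rcases le_total 0 b with hb | hb
      · exact h b hb
      · rw [IntervalIntegrable.iff_comp_neg, neg_zero]
        simpa using h (-b) (by linarith)
    exact (key a).symm.trans (key b)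
  intro b hb
  have := intervalIntegral.intervalIntegrable_rpow' (r := -α) hα (a := 0) (b := b)
  rw [intervalIntegrable_iff] at this ⊢
  refine this.congr_fun ?_ measurableSet_uIoc
  intro s hs
  rw [Set.uIoc_of_le hb] at hs
  simp only []
  simp only [abs_of_nonneg hs.1.le]

lemma abs_rpow_int0 (α : ℝ) (hα0 : 0 < α) (hα1 : α < 1) (b : ℝ) (hb : 0 ≤ b) :
    ∫ s in (0:ℝ)..b, |s| ^ (-α) = b ^ (1 - α) / (1 - α) := by
  have hcongr : ∀ s ∈ Set.uIcc (0:ℝ) b, |s| ^ (-α) = s ^ (-α) := by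
    intro s hs
    rw [Set.uIcc_of_le hb] at hs
    rw [abs_of_nonneg hs.1]
  rw [intervalIntegral.integral_congr hcongr,
    integral_rpow (Or.inl (by linarith))]
  rw [Real.zero_rpow (by linarith)]
  ring_nf

/-- If `c > 1` and `α ∈ (0,1)` satisfy `(c+1)^{1-α} + (c-1)^{1-α} ≤ 2(1-α)c`, then
for every `x ≠ 0`, `λ_{x,c|x|}(|·|^{-α}) ≤ |x|^{-α}`, i.e.
`(1/(2c|x|)) ∫_{x-c|x|}^{x+c|x|} |s|^{-α} ds ≤ |x|^{-α}`. -/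
theorem stmt18 (c α : ℝ) (hc : 1 < c) (hα0 : 0 < α) (hα1 : α < 1)
    (h : (c + 1) ^ (1 - α) + (c - 1) ^ (1 - α) ≤ 2 * (1 - α) * c) :
    ∀ x : ℝ, x ≠ 0 →
      (1 / (2 * (c * |x|))) * (∫ s in (x - c * |x|)..(x + c * |x|), |s| ^ (-α))
      ≤ |x| ^ (-α) := by
  intro x hx
  have hxpos : 0 < |x| := abs_pos.mpr hx
  set a := x - c * |x| with ha
  set b := x + c * |x| with hb
  have hx' : |x| ≤ c * |x| := le_mul_of_one_le_left hxpos.le hc.le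
  have ha0 : a ≤ 0 := by
    have := le_abs_self x; simp only [ha]; linarith
  have hb0 : 0 ≤ b := by
    have := neg_abs_le x; simp only [hb]; linarith
  have hα' : (-1 : ℝ) < -α := by linarith
  have hsplit : (∫ s in a..b, |s| ^ (-α))
      = (∫ s in a..(0:ℝ), |s| ^ (-α)) + ∫ s in (0:ℝ)..b, |s| ^ (-α) :=
    (intervalIntegral.integral_add_adjacent_intervals
      (abs_rpow_intInt α hα' a 0) (abs_rpow_intInt α hα' 0 b)).symm
  have heven : (∫ s in a..(0:ℝ), |s| ^ (-α)) = ∫ s in (0:ℝ)..(-a), |s| ^ (-α) := by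
    rw [show (∫ s in (0:ℝ)..(-a), |s| ^ (-α))
        = ∫ s in (0:ℝ)..(-a), |(-s)| ^ (-α) by simp,
      intervalIntegral.integral_comp_neg (fun s => |s| ^ (-α))]
    simp
  have hIval : (∫ s in a..b, |s| ^ (-α))
      = (-a) ^ (1 - α) / (1 - α) + b ^ (1 - α) / (1 - α) := by
    rw [hsplit, heven, abs_rpow_int0 α hα0 hα1 (-a) (by linarith),
      abs_rpow_int0 α hα0 hα1 b hb0]
  -- (-a) and b are (c∓1)|x| or (c±1)|x| depending on sign of x
  have hsum : (-a) ^ (1 - α) + b ^ (1 - α)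
      = |x| ^ (1 - α) * ((c + 1) ^ (1 - α) + (c - 1) ^ (1 - α)) := by
    rcases abs_cases x with ⟨hxe, _⟩ | ⟨hxe, _⟩
    · have h1 : -a = (c - 1) * |x| := by rw [ha, hxe]; ring
      have h2 : b = (c + 1) * |x| := by rw [hb, hxe]; ring
      rw [h1, h2, Real.mul_rpow (by linarith) hxpos.le,
        Real.mul_rpow (by linarith) hxpos.le]
      ring
    · have h1 : -a = (c + 1) * |x| := by rw [ha, hxe]; ring
      have h2 : b = (c - 1) * |x| := by rw [hb, hxe]; ring
      rw [h1, h2, Real.mul_rpow (by linarith) hxpos.le,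
        Real.mul_rpow (by linarith) hxpos.le]
      ring
  have hIle : (∫ s in a..b, |s| ^ (-α)) ≤ |x| ^ (1 - α) * (2 * c) := by
    rw [hIval, ← add_div, div_le_iff₀ (by linarith : (0:ℝ) < 1 - α), hsum]
    calc |x| ^ (1 - α) * ((c + 1) ^ (1 - α) + (c - 1) ^ (1 - α))
        ≤ |x| ^ (1 - α) * (2 * (1 - α) * c) := by
          exact mul_le_mul_of_nonneg_left h (Real.rpow_nonneg hxpos.le _)
      _ = |x| ^ (1 - α) * (2 * c) * (1 - α) := by ring
  have hden : (0:ℝ) < 2 * (c * |x|) := by positivity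
  rw [div_mul_eq_mul_div, one_mul, div_le_iff₀ hden]
  calc (∫ s in a..b, |s| ^ (-α)) ≤ |x| ^ (1 - α) * (2 * c) := hIle
    _ = |x| ^ (-α) * (2 * (c * |x|)) := by
        rw [show (1 : ℝ) - α = -α + 1 by ring, Real.rpow_add hxpos, Real.rpow_one]
        ring
end
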